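/- Let λ > 1 and θ real with λθ such that the 2×2 matrix M(K) = [[-λθ, -λθ(1-K)],[λ(1+θ), λ(1+θ)(1-K)+K]]. Then M(K) is Schur stable if and only if the three Jury inequalities hold: (λ-1)(K-1) > 0, λθK + 1 > 0, and 2λθK + (λ-1)K - λ - 1 < 0. -/

import Mathlib

open Matrix Polynomial

lemma charpoly_fin_two' (M : Matrix (Fin 2) (Fin 2) ℂ) :
    M.charpoly = X^2 - C M.trace * X + C M.det := by
  rw [Matrix.charpoly, Matrix.det_fin_two]
  simp [Matrix.charmatrix_apply_eq, Matrix.charmatrix_apply_ne, Matrix.trace_fin_two,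
    Matrix.det_fin_two]
  ring

lemma abs_lt_one_iff_sq' (z : ℂ) : ‖z‖ < 1 ↔ z.re^2 + z.im^2 < 1 := by
  have h2 := Complex.sq_norm z
  rw [Complex.normSq_apply] at h2
  constructor <;> intro h <;> nlinarith [norm_nonneg z]

lemma quad_jury (t d : ℝ) :
    (∀ z : ℂ, z^2 - t*z + d = 0 → ‖z‖ < 1) ↔
      (0 < 1 - t + d ∧ 0 < 1 - d ∧ 0 < 1 + t + d) := by
  constructor
  · intro h
    rcases le_or_gt 0 (t^2 - 4*d) with hD | hD
    · set s := Real.sqrt (t^2 - 4*d) with hs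
      have hs2 : s^2 = t^2 - 4*d := Real.sq_sqrt hD
      have root : ∀ x : ℝ, x^2 - t*x + d = 0 → |x| < 1 := by
        intro x hx
        have := h x (by
          rw [show ((x:ℂ)^2 - t*x + d) = ((x^2 - t*x + d : ℝ) : ℂ) by push_cast; ring, hx]
          simp)
        rwa [Complex.norm_real, Real.norm_eq_abs] at this
      have h1 := root ((t+s)/2) (by nlinarith)
      have h2 := root ((t-s)/2) (by nlinarith)
      rw [abs_lt] at h1 h2
      refine ⟨by nlinarith, by nlinarith, by nlinarith⟩
    · set y := Real.sqrt (4*d - t^2) / 2 with hy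
      have hy2 : y^2 = (4*d - t^2)/4 := by
        rw [hy, div_pow, Real.sq_sqrt (by linarith)]; ring
      have hypos : 0 < y := by
        have : 0 < Real.sqrt (4*d - t^2) := Real.sqrt_pos.mpr (by linarith)
        rw [hy]; linarith
      set z : ℂ := ⟨t/2, y⟩ with hz
      have hzre : z.re = t/2 := rfl
      have hzim : z.im = y := rfl
      have hroot : z^2 - t*z + d = 0 := by
        apply Complex.ext <;>
          simp [pow_two, Complex.mul_re, Complex.mul_im, hzre, hzim] <;> nlinarith
      have := (abs_lt_one_iff_sq' z).mp (h z hroot)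
      rw [hzre, hzim] at this
      refine ⟨by nlinarith, by nlinarith, by nlinarith⟩
  · rintro ⟨h1, h2, h3⟩ z hz
    rw [abs_lt_one_iff_sq']
    set x := z.re; set y := z.im
    have hre : x^2 - y^2 - t*x + d = 0 := by
      have := congrArg Complex.re hz
      simpa [pow_two, Complex.mul_re, Complex.mul_im] using this
    have him : y * (2*x - t) = 0 := by
      have := congrArg Complex.im hz
      simp [pow_two, Complex.mul_re, Complex.mul_im] at this
      nlinarith [this]
    rcases mul_eq_zero.mp him with hy0 | hxt
    · rw [hy0]
      set w := t - x with hw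
      have hprod : x * w = d := by rw [hw]; nlinarith
      have hp1 : (1 - x) * (1 - w) > 0 := by rw [hw]; nlinarith
      have hp2 : (1 + x) * (1 + w) > 0 := by rw [hw]; nlinarith
      have hx1 : x < 1 := by
        by_contra hc; push_neg at hc
        rcases le_or_gt w 1 with hw1 | hw1
        · nlinarith [mul_nonneg (by linarith : (0:ℝ) ≤ x - 1) (by linarith : (0:ℝ) ≤ 1 - w)]
        · nlinarith [mul_nonneg (by linarith : (0:ℝ) ≤ x - 1) (by linarith : (0:ℝ) ≤ w - 1)]
      have hx2 : -1 < x := by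
        by_contra hc; push_neg at hc
        rcases le_or_gt (-1) w with hw1 | hw1
        · nlinarith [mul_nonneg (by linarith : (0:ℝ) ≤ -1 - x) (by linarith : (0:ℝ) ≤ 1 + w)]
        · nlinarith [mul_nonneg (by linarith : (0:ℝ) ≤ -1 - x) (by linarith : (0:ℝ) ≤ -1 - w)]
      nlinarith
    · have ht : t = 2*x := by linarith
      nlinarith

/-- Jury criterion for the closed loop with a static gain `K`: the matrix
`M(K) = [[-λθ, -λθ(1-K)],[λ(1+θ), λ(1+θ)(1-K)+K]]` is Schur stable (all complex
eigenvalues in the open unit disc) iff `(λ-1)(K-1) > 0`, `λθK + 1 > 0` and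
`2λθK + (λ-1)K - λ - 1 < 0`. -/
theorem static_gain_jury (lam θ K : ℝ) (hlam : 1 < lam)
    (M : Matrix (Fin 2) (Fin 2) ℝ)
    (hM : M = Matrix.of ![![-(lam * θ), -(lam * θ) * (1 - K)],
                          ![lam * (1 + θ), lam * (1 + θ) * (1 - K) + K]]) :
    (∀ z : ℂ, ((M.map (Complex.ofReal)).charpoly).IsRoot z → ‖z‖ < 1)
      ↔ ((lam - 1) * (K - 1) > 0 ∧ lam * θ * K + 1 > 0
          ∧ 2 * lam * θ * K + (lam - 1) * K - lam - 1 < 0) := by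
  have e1 : (M.map Complex.ofReal).trace = ((lam - lam*(1+θ)*K + K : ℝ) : ℂ) := by
    simp [hM, Matrix.trace_fin_two, Matrix.map_apply]
    push_cast; ring
  have e2 : (M.map Complex.ofReal).det = ((-(lam*θ*K) : ℝ) : ℂ) := by
    simp [hM, Matrix.det_fin_two, Matrix.map_apply]
    push_cast; ring
  have key : ∀ z : ℂ, ((M.map Complex.ofReal).charpoly).IsRoot z ↔
      z^2 - ((lam - lam*(1+θ)*K + K : ℝ) : ℂ)*z + ((-(lam*θ*K) : ℝ) : ℂ) = 0 := by
    intro z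
    rw [charpoly_fin_two', Polynomial.IsRoot.def, e1, e2]
    simp
  simp only [key]
  rw [quad_jury]
  constructor
  · rintro ⟨a, b, c⟩
    exact ⟨by nlinarith, by nlinarith, by nlinarith⟩
  · rintro ⟨a, b, c⟩
    exact ⟨by nlinarith, by nlinarith, by nlinarith⟩
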